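/- The symmetry group of the fan of V_{(2,29)} has order 36: the set G of permutations σ of {1,…,6} for which there exists a matrix M ∈ GL₄(ℤ) with M·v_i = v_{σ(i)} for all i = 1,…,6 is a subgroup of the symmetric group S₆; G has exactly 36 elements and is generated by the permutations a = (2 3 4), b = (3 4)(5 6), and c = (1 2)(3 5)(4 6). -/

import Mathlib

open Matrix

/-- The primitive ray generators of the fan `Σ` of the family `V_{(2,29)}`. -/
def rayGen : Fin 6 → Fin 4 → ℤ :=
  ![![1,0,0,0], ![0,1,0,0], ![0,0,1,0], ![0,-1,-1,0], ![1,1,2,3], ![-2,-1,-2,-3]]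

/-- The set of permutations of the rays realized by a lattice automorphism. -/
def fanSymmetries : Set (Equiv.Perm (Fin 6)) :=
  {σ | ∃ M : GL (Fin 4) ℤ,
    ∀ i : Fin 6, (M : Matrix (Fin 4) (Fin 4) ℤ).mulVec (rayGen i) = rayGen (σ i)}

/-- The fourth column (times 3) of the candidate matrix realizing `σ`. -/
def col4 (σ : Equiv.Perm (Fin 6)) (i : Fin 4) : ℤ :=
  rayGen (σ 4) i - rayGen (σ 0) i - rayGen (σ 1) i - 2 * rayGen (σ 2) i

/-- The candidate matrix realizing `σ`. -/
def Mmat (σ : Equiv.Perm (Fin 6)) : Matrix (Fin 4) (Fin 4) ℤ :=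
  Matrix.of fun i j => ![rayGen (σ 0) i, rayGen (σ 1) i, rayGen (σ 2) i, col4 σ i / 3] j

/-- Explicit formula for the determinant of a 4×4 integer matrix. -/
def det4 (M : Matrix (Fin 4) (Fin 4) ℤ) : ℤ :=
  M 0 0*M 1 1*M 2 2*M 3 3 - M 0 0*M 1 1*M 2 3*M 3 2 - M 0 0*M 1 2*M 2 1*M 3 3 + M 0 0*M 1 2*M 2 3*M 3 1 + M 0 0*M 1 3*M 2 1*M 3 2 - M 0 0*M 1 3*M 2 2*M 3 1 - M 0 1*M 1 0*M 2 2*M 3 3 + M 0 1*M 1 0*M 2 3*M 3 2 + M 0 1*M 1 2*M 2 0*M 3 3 - M 0 1*M 1 2*M 2 3*M 3 0 - M 0 1*M 1 3*M 2 0*M 3 2 + M 0 1*M 1 3*M 2 2*M 3 0 + M 0 2*M 1 0*M 2 1*M 3 3 - M 0 2*M 1 0*M 2 3*M 3 1 - M 0 2*M 1 1*M 2 0*M 3 3 + M 0 2*M 1 1*M 2 3*M 3 0 + M 0 2*M 1 3*M 2 0*M 3 1 - M 0 2*M 1 3*M 2 1*M 3 0 - M 0 3*M 1 0*M 2 1*M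 3 2 + M 0 3*M 1 0*M 2 2*M 3 1 + M 0 3*M 1 1*M 2 0*M 3 2 - M 0 3*M 1 1*M 2 2*M 3 0 - M 0 3*M 1 2*M 2 0*M 3 1 + M 0 3*M 1 2*M 2 1*M 3 0

lemma det4_eq (M : Matrix (Fin 4) (Fin 4) ℤ) : M.det = det4 M := by
  simp [Matrix.det_succ_row_zero, Fin.sum_univ_succ, det4, Fin.succAbove]
  ring

/-- Decidable characterization of realizability of `σ`. -/
def P (σ : Equiv.Perm (Fin 6)) : Prop :=
  (∀ i, col4 σ i % 3 = 0) ∧ (det4 (Mmat σ) = 1 ∨ det4 (Mmat σ) = -1) ∧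
  (Mmat σ).mulVec (rayGen 3) = rayGen (σ 3) ∧ (Mmat σ).mulVec (rayGen 5) = rayGen (σ 5)

instance : DecidablePred P := fun σ => by unfold P; infer_instance

lemma P_mem {σ : Equiv.Perm (Fin 6)} (h : P σ) : σ ∈ fanSymmetries := by
  obtain ⟨h3, hdet, h4, h6⟩ := h
  have hd : IsUnit (Mmat σ).det := by
    rw [det4_eq]
    rcases hdet with h | h <;> rw [h] <;> exact Int.isUnit_iff.mpr (by tauto)
  refine ⟨Matrix.nonsingInvUnit _ hd, ?_⟩
  have hcoe : ((Matrix.nonsingInvUnit _ hd : GL (Fin 4) ℤ) : Matrix (Fin 4) (Fin 4) ℤ)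
      = Mmat σ := rfl
  rw [hcoe]
  intro i
  fin_cases i
  · funext k
    simp [Mmat, show rayGen 0 = ![1,0,0,0] from rfl, Matrix.mulVec, dotProduct,
      Fin.sum_univ_four]
  · funext k
    simp [Mmat, show rayGen 1 = ![0,1,0,0] from rfl, Matrix.mulVec, dotProduct,
      Fin.sum_univ_four]
  · funext k
    simp [Mmat, show rayGen 2 = ![0,0,1,0] from rfl, Matrix.mulVec, dotProduct,
      Fin.sum_univ_four]
  · exact h4
  · show Mmat σ *ᵥ rayGen 4 = rayGen (σ 4)
    funext k
    have hk := h3 k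
    unfold col4 at hk
    simp only [Mmat, show rayGen 4 = ![1,1,2,3] from rfl, Matrix.mulVec, dotProduct,
      Fin.sum_univ_four, Matrix.of_apply, Matrix.cons_val_zero, Matrix.cons_val_one,
      Matrix.head_cons, Matrix.cons_val_two, Matrix.tail_cons, Matrix.cons_val_three]
    show rayGen (σ 0) k * 1 + rayGen (σ 1) k * 1 + rayGen (σ 2) k * 2 +
      ((rayGen (σ 4) k - rayGen (σ 0) k - rayGen (σ 1) k - 2 * rayGen (σ 2) k) / 3) * 3
      = rayGen (σ 4) k
    omega
  · exact h6

lemma mem_P {σ : Equiv.Perm (Fin 6)} (h : σ ∈ fanSymmetries) : P σ := by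
  obtain ⟨M, hM⟩ := h
  set A : Matrix (Fin 4) (Fin 4) ℤ := (M : Matrix (Fin 4) (Fin 4) ℤ) with hA
  have h0 := hM 0
  have h1 := hM 1
  have h2 := hM 2
  have h4 := hM 4
  have e0 : ∀ k, A k 0 = rayGen (σ 0) k := by
    intro k
    have := congrFun h0 k
    simpa [show rayGen 0 = ![1,0,0,0] from rfl, Matrix.mulVec, dotProduct,
      Fin.sum_univ_four] using this
  have e1 : ∀ k, A k 1 = rayGen (σ 1) k := by
    intro k
    have := congrFun h1 k
    simpa [show rayGen 1 = ![0,1,0,0] from rfl, Matrix.mulVec, dotProduct,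
      Fin.sum_univ_four] using this
  have e2 : ∀ k, A k 2 = rayGen (σ 2) k := by
    intro k
    have := congrFun h2 k
    simpa [show rayGen 2 = ![0,0,1,0] from rfl, Matrix.mulVec, dotProduct,
      Fin.sum_univ_four] using this
  have e3 : ∀ k, 3 * A k 3 = col4 σ k := by
    intro k
    have h4k := congrFun h4 k
    simp only [show rayGen 4 = ![1,1,2,3] from rfl, Matrix.mulVec, dotProduct,
      Fin.sum_univ_four, Matrix.cons_val_zero, Matrix.cons_val_one, Matrix.head_cons,
      Matrix.cons_val_two, Matrix.tail_cons, Matrix.cons_val_three] at h4k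
    have := e0 k; have := e1 k; have := e2 k
    unfold col4
    omega
  have hMeq : Mmat σ = A := by
    ext k j
    fin_cases j
    · exact (e0 k).symm
    · exact (e1 k).symm
    · exact (e2 k).symm
    · show col4 σ k / 3 = A k 3
      have := e3 k
      omega
  refine ⟨fun k => by have := e3 k; omega, ?_, ?_, ?_⟩
  · rw [hMeq, ← det4_eq]
    have : IsUnit A.det := (Matrix.isUnit_iff_isUnit_det A).mp M.isUnit
    exact Int.isUnit_iff.mp this
  · rw [hMeq]; exact hM 3
  · rw [hMeq]; exact hM 5

lemma mem_iff (σ : Equiv.Perm (Fin 6)) : σ ∈ fanSymmetries ↔ P σ :=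
  ⟨mem_P, P_mem⟩

/-- The symmetry group as an explicit subgroup of `S₆`. -/
def Hfan : Subgroup (Equiv.Perm (Fin 6)) where
  carrier := fanSymmetries
  one_mem' := ⟨1, fun i => by simp⟩
  mul_mem' := by
    rintro σ τ ⟨M, hM⟩ ⟨N, hN⟩
    refine ⟨M * N, fun i => ?_⟩
    rw [Units.val_mul, ← Matrix.mulVec_mulVec, hN, hM]
    rfl
  inv_mem' := by
    rintro σ ⟨M, hM⟩
    refine ⟨M⁻¹, fun i => ?_⟩
    have := hM (σ⁻¹ i)
    rw [show σ (σ⁻¹ i) = i from σ.apply_symm_apply i] at this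
    rw [← this, Matrix.mulVec_mulVec, ← Units.val_mul, inv_mul_cancel, Units.val_one,
      Matrix.one_mulVec]

def a : Equiv.Perm (Fin 6) := Equiv.swap 1 2 * Equiv.swap 2 3
def b : Equiv.Perm (Fin 6) := Equiv.swap 2 3 * Equiv.swap 4 5
def c : Equiv.Perm (Fin 6) := Equiv.swap 0 1 * Equiv.swap 2 4 * Equiv.swap 3 5

/-- The 36 symmetries, written as words in the generators. -/
def W : List (Equiv.Perm (Fin 6)) :=
  [1, b, a*b, a, a*a, b*a, c, b*c, c*a*b, c*a, c*a*a, b*c*a, a*c, a*b*c, a*c*a*b, a*c*a,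
   a*c*a*a, a*b*c*a, a*a*c, b*a*c, a*a*c*a*b, a*a*c*a, a*a*c*a*a, b*a*c*a, c*a*c, c*a*b*c,
   a*c*a*b*c, a*c*a*c, a*a*c*a*c, c*a*b*c*a, c*a*a*c, b*c*a*c, a*b*c*a*c, a*c*a*a*c,
   a*a*c*a*a*c, b*a*c*a*c]

set_option maxHeartbeats 4000000 in
set_option maxRecDepth 10000 in
lemma P_mem_W : ∀ σ : Equiv.Perm (Fin 6), P σ → σ ∈ W := by decide

set_option maxHeartbeats 2000000 in
/-- The symmetry group of the fan of `V_{(2,29)}` is a subgroup of `S₆` of order 36,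
generated by the permutations `a = (2 3 4)`, `b = (3 4)(5 6)`, `c = (1 2)(3 5)(4 6)`
(written here in 0-indexed form). -/
theorem V229_fan_symmetry_group :
    ∃ H : Subgroup (Equiv.Perm (Fin 6)),
      (H : Set (Equiv.Perm (Fin 6))) = fanSymmetries ∧
      Nat.card H = 36 ∧
      H = Subgroup.closure
        {Equiv.swap (1 : Fin 6) 2 * Equiv.swap 2 3,
         Equiv.swap (2 : Fin 6) 3 * Equiv.swap 4 5,
         Equiv.swap (0 : Fin 6) 1 * Equiv.swap 2 4 * Equiv.swap 3 5} := by
  set S : Set (Equiv.Perm (Fin 6)) :=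
    {Equiv.swap (1 : Fin 6) 2 * Equiv.swap 2 3,
     Equiv.swap (2 : Fin 6) 3 * Equiv.swap 4 5,
     Equiv.swap (0 : Fin 6) 1 * Equiv.swap 2 4 * Equiv.swap 3 5} with hS
  have ha : a ∈ Subgroup.closure S := Subgroup.subset_closure (by left; rfl)
  have hb : b ∈ Subgroup.closure S :=
    Subgroup.subset_closure (by right; left; rfl)
  have hc : c ∈ Subgroup.closure S :=
    Subgroup.subset_closure (by right; right; rfl)
  have hW : ∀ w ∈ W, w ∈ Subgroup.closure S := by
    intro w hw
    simp only [W, List.mem_cons, List.not_mem_nil, or_false] at hw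
    rcases hw with rfl|rfl|rfl|rfl|rfl|rfl|rfl|rfl|rfl|rfl|rfl|rfl|rfl|rfl|rfl|rfl|rfl|rfl|
      rfl|rfl|rfl|rfl|rfl|rfl|rfl|rfl|rfl|rfl|rfl|rfl|rfl|rfl|rfl|rfl|rfl|rfl
    exacts [one_mem _,
      hb,
      mul_mem (ha) hb,
      ha,
      mul_mem (ha) ha,
      mul_mem (hb) ha,
      hc,
      mul_mem (hb) hc,
      mul_mem (mul_mem (hc) ha) hb,
      mul_mem (hc) ha,
      mul_mem (mul_mem (hc) ha) ha,
      mul_mem (mul_mem (hb) hc) ha,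
      mul_mem (ha) hc,
      mul_mem (mul_mem (ha) hb) hc,
      mul_mem (mul_mem (mul_mem (ha) hc) ha) hb,
      mul_mem (mul_mem (ha) hc) ha,
      mul_mem (mul_mem (mul_mem (ha) hc) ha) ha,
      mul_mem (mul_mem (mul_mem (ha) hb) hc) ha,
      mul_mem (mul_mem (ha) ha) hc,
      mul_mem (mul_mem (hb) ha) hc,
      mul_mem (mul_mem (mul_mem (mul_mem (ha) ha) hc) ha) hb,
      mul_mem (mul_mem (mul_mem (ha) ha) hc) ha,
      mul_mem (mul_mem (mul_mem (mul_mem (ha) ha) hc) ha) ha,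
      mul_mem (mul_mem (mul_mem (hb) ha) hc) ha,
      mul_mem (mul_mem (hc) ha) hc,
      mul_mem (mul_mem (mul_mem (hc) ha) hb) hc,
      mul_mem (mul_mem (mul_mem (mul_mem (ha) hc) ha) hb) hc,
      mul_mem (mul_mem (mul_mem (ha) hc) ha) hc,
      mul_mem (mul_mem (mul_mem (mul_mem (ha) ha) hc) ha) hc,
      mul_mem (mul_mem (mul_mem (mul_mem (hc) ha) hb) hc) ha,
      mul_mem (mul_mem (mul_mem (hc) ha) ha) hc,
      mul_mem (mul_mem (mul_mem (hb) hc) ha) hc,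
      mul_mem (mul_mem (mul_mem (mul_mem (ha) hb) hc) ha) hc,
      mul_mem (mul_mem (mul_mem (mul_mem (ha) hc) ha) ha) hc,
      mul_mem (mul_mem (mul_mem (mul_mem (mul_mem (ha) ha) hc) ha) ha) hc,
      mul_mem (mul_mem (mul_mem (mul_mem (hb) ha) hc) ha) hc]
  have hle : Hfan ≤ Subgroup.closure S := by
    intro σ hσ
    exact hW σ (P_mem_W σ (mem_P hσ))
  have hge : Subgroup.closure S ≤ Hfan := by
    rw [Subgroup.closure_le]
    rintro x (rfl | rfl | rfl)
    · exact P_mem (by decide)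
    · exact P_mem (by decide)
    · exact P_mem (by decide)
  have heq : Hfan = Subgroup.closure S := le_antisymm hle hge
  refine ⟨Hfan, rfl, ?_, heq⟩
  have hmemW : ∀ σ, σ ∈ Hfan ↔ σ ∈ W.toFinset := by
    intro σ
    constructor
    · intro h
      exact List.mem_toFinset.mpr (P_mem_W σ (mem_P h))
    · intro h
      rw [heq]
      exact hW σ (List.mem_toFinset.mp h)
  have hcard : Nat.card Hfan = Nat.card {σ : Equiv.Perm (Fin 6) // σ ∈ W.toFinset} :=
    Nat.card_congr (Equiv.subtypeEquivRight hmemW)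
  rw [hcard, Nat.card_eq_fintype_card, Fintype.card_coe]
  set_option maxRecDepth 10000 in decide
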